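/- Let A ∈ ℝ^{n×n}, B ∈ ℝ^{n×m}, C ∈ ℝ^{p×n}, D ∈ ℝ^{p×m}, B_d ∈ ℝ^{n×n_d}, F₁, F₂ ∈ ℝ^{m×n}, and let K ∈ ℝ^{N×N} be symmetric. For γ ∈ ℝ set A_γ = A − B(F₁+γF₂) and C_γ = C − D(F₁+γF₂), and set Â = I_N⊗(A−BF₁) − K⊗(BF₂) and Ĉ = I_N⊗(C−DF₁) − K⊗(DF₂). Let s ∈ ℂ be such that sI_n − A_γ is invertible for every eigenvalue γ of K. Then sI_{Nn} − Â is invertible and the ℓ² operator norm satisfies ‖Ĉ(sI_{Nn} − Â)⁻¹(I_N⊗B_d)‖ = max_{γ ∈ σ(K)} ‖C_γ(sI_n − A_γ)⁻¹B_d‖. -/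

import Mathlib

open Matrix
open scoped Kronecker Matrix.Norms.L2Operator


variable {a b c : Type*} [Fintype a] [Fintype b] [Fintype c] [DecidableEq a] [DecidableEq b]

-- application of the CLM as mulVec
lemma l2_apply (A : Matrix a b ℂ) (x : EuclideanSpace ℂ b) :
    ((Matrix.toEuclideanLin (𝕜 := ℂ) (m := a) (n := b)).trans LinearMap.toContinuousLinearMap A) x
      = (WithLp.equiv 2 (a → ℂ)).symm (A *ᵥ (WithLp.equiv 2 (b → ℂ)) x) := by
  simp [Matrix.toEuclideanLin_apply]

lemma l2_opNorm_le_bound (A : Matrix a b ℂ) {C : ℝ} (hC : 0 ≤ C)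
    (h : ∀ x : EuclideanSpace ℂ b,
      ‖(WithLp.equiv 2 (a → ℂ)).symm (A *ᵥ (WithLp.equiv 2 (b → ℂ)) x)‖ ≤ C * ‖x‖) :
    ‖A‖ ≤ C := by
  rw [Matrix.l2_opNorm_def]
  refine ContinuousLinearMap.opNorm_le_bound _ hC (fun x => ?_)
  have : (LinearMap.toContinuousLinearMap (toEuclideanLin A)) x
      = (WithLp.equiv 2 (a → ℂ)).symm (A *ᵥ (WithLp.equiv 2 (b → ℂ)) x) := by
    simpa using Matrix.toEuclideanLin_apply (𝕜 := ℂ) A x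
  simp only [LinearEquiv.trans_apply]
  rw [this]
  exact h x

lemma l2_norm_one : ‖(1 : Matrix a a ℂ)‖ ≤ 1 := by
  apply l2_opNorm_le_bound _ zero_le_one
  intro x
  simp

lemma l2_norm_le_one_of_isometry (W : Matrix a a ℂ) (h : Wᴴ * W = 1) : ‖W‖ ≤ 1 := by
  have h2 : ‖W‖ * ‖W‖ ≤ 1 := by
    rw [← Matrix.l2_opNorm_conjTranspose_mul_self, h]; exact l2_norm_one
  nlinarith [norm_nonneg W]

lemma l2_norm_unitary_conj (V₁ : Matrix a a ℂ) (V₂ : Matrix b b ℂ)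
    (h₁ : V₁ᴴ * V₁ = 1) (h₁' : V₁ * V₁ᴴ = 1)
    (h₂ : V₂ᴴ * V₂ = 1) (h₂' : V₂ * V₂ᴴ = 1)
    (M : Matrix a b ℂ) : ‖V₁ * M * V₂‖ = ‖M‖ := by
  classical
  have key : ∀ (W₁ : Matrix a a ℂ) (W₂ : Matrix b b ℂ), W₁ᴴ * W₁ = 1 → W₂ * W₂ᴴ = 1 →
      ∀ (X : Matrix a b ℂ), ‖W₁ * X * W₂‖ ≤ ‖X‖ := by
    intro W₁ W₂ hW₁ hW₂ X
    have n₁ : ‖W₁‖ ≤ 1 := l2_norm_le_one_of_isometry W₁ hW₁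
    have n₂ : ‖W₂‖ ≤ 1 := by
      have : (W₂ᴴ)ᴴ * W₂ᴴ = 1 := by simpa using hW₂
      have := l2_norm_le_one_of_isometry (W₂ᴴ) this
      rwa [Matrix.l2_opNorm_conjTranspose] at this
    calc ‖W₁ * X * W₂‖ ≤ ‖W₁ * X‖ * ‖W₂‖ := Matrix.l2_opNorm_mul _ _
      _ ≤ ‖W₁‖ * ‖X‖ * ‖W₂‖ := by
          have := Matrix.l2_opNorm_mul W₁ X
          have h2 : (0:ℝ) ≤ ‖W₂‖ := norm_nonneg _
          nlinarith [norm_nonneg X, norm_nonneg W₁]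
      _ ≤ ‖X‖ := by
          have t1 : ‖W₁‖ * ‖X‖ ≤ ‖X‖ := mul_le_of_le_one_left (norm_nonneg _) n₁
          have t2 : ‖W₁‖ * ‖X‖ * ‖W₂‖ ≤ ‖W₁‖ * ‖X‖ :=
            mul_le_of_le_one_right (mul_nonneg (norm_nonneg _) (norm_nonneg _)) n₂
          linarith
  apply le_antisymm
  · exact key V₁ V₂ h₁ h₂' (M)
  · have : M = V₁ᴴ * (V₁ * M * V₂) * V₂ᴴ := by
      rw [Matrix.mul_assoc, Matrix.mul_assoc, h₂', Matrix.mul_one, ← Matrix.mul_assoc, h₁, Matrix.one_mul]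
    calc ‖M‖ = ‖V₁ᴴ * (V₁ * M * V₂) * V₂ᴴ‖ := by rw [← this]
      _ ≤ ‖V₁ * M * V₂‖ := key _ _ (by simpa using h₁') (by simpa using h₂) _

section kdiag
variable {ι : Type*} [Fintype ι] [DecidableEq ι]
variable {q r t : Type*} [Fintype q] [Fintype r] [Fintype t]

/-- Block diagonal matrix with block index first. -/
def kdiag (f : ι → Matrix q r ℂ) : Matrix (ι × q) (ι × r) ℂ :=
  Matrix.of fun x y => if x.1 = y.1 then f x.1 x.2 y.2 else 0

lemma kdiag_apply (f : ι → Matrix q r ℂ) (x : ι × q) (y : ι × r) :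
    kdiag f x y = if x.1 = y.1 then f x.1 x.2 y.2 else 0 := rfl

lemma kdiag_mul (f : ι → Matrix q r ℂ) (g : ι → Matrix r t ℂ) :
    kdiag f * kdiag g = kdiag (fun i => f i * g i) := by
  ext ⟨i, j⟩ ⟨i', k⟩
  simp only [Matrix.mul_apply, kdiag_apply, Fintype.sum_prod_type]
  rcases eq_or_ne i i' with rfl | h
  · simp [Finset.sum_ite_eq', Matrix.mul_apply]
  · rw [Finset.sum_eq_zero]
    · simp [h]
    · intro x _
      rcases eq_or_ne i x with rfl | hx
      · simp [h]
      · simp [hx]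

lemma kdiag_one [DecidableEq q] : kdiag (fun _ : ι => (1 : Matrix q q ℂ)) = 1 := by
  ext ⟨i, j⟩ ⟨i', k⟩
  simp only [kdiag_apply, Matrix.one_apply, Prod.mk.injEq, Prod.ext_iff]
  by_cases h : i = i' <;> by_cases h2 : j = k <;> simp [h, h2]

lemma kdiag_isUnit [DecidableEq q] (f : ι → Matrix q q ℂ) (hf : ∀ i, IsUnit (f i)) :
    IsUnit (kdiag f) := by
  refine isUnit_iff_exists.2 ⟨kdiag (fun i => (f i)⁻¹), ?_, ?_⟩
  · rw [kdiag_mul, ← kdiag_one]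
    exact congrArg kdiag (funext fun i =>
      Matrix.mul_nonsing_inv _ ((Matrix.isUnit_iff_isUnit_det _).1 (hf i)))
  · rw [kdiag_mul, ← kdiag_one]
    exact congrArg kdiag (funext fun i =>
      Matrix.nonsing_inv_mul _ ((Matrix.isUnit_iff_isUnit_det _).1 (hf i)))

lemma kdiag_inv [DecidableEq q] (f : ι → Matrix q q ℂ) (hf : ∀ i, IsUnit (f i)) :
    (kdiag f)⁻¹ = kdiag (fun i => (f i)⁻¹) := by
  apply Matrix.inv_eq_right_inv
  rw [kdiag_mul, ← kdiag_one]
  exact congrArg kdiag (funext fun i =>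
    Matrix.mul_nonsing_inv _ ((Matrix.isUnit_iff_isUnit_det _).1 (hf i)))

end kdiag

section knorm
variable {ι : Type*} [Fintype ι] [DecidableEq ι]
variable {q r : Type*} [Fintype q] [Fintype r] [DecidableEq q] [DecidableEq r]

lemma euclid_norm_sq {d : Type*} [Fintype d] (x : EuclideanSpace ℂ d) :
    ‖x‖ ^ 2 = ∑ i, ‖x i‖ ^ 2 := by
  rw [EuclideanSpace.norm_eq, Real.sq_sqrt]
  exact Finset.sum_nonneg fun i _ => sq_nonneg _

lemma kdiag_mulVec (f : ι → Matrix q r ℂ) (v : ι × r → ℂ) (i : ι) (j : q) :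
    (kdiag f *ᵥ v) (i, j) = (f i *ᵥ fun k => v (i, k)) j := by
  simp only [Matrix.mulVec, dotProduct, kdiag_apply, Fintype.sum_prod_type]
  rw [Finset.sum_eq_single i]
  · simp
  · intro x _ hx; simp [hx.symm, fun k => (Ne.symm hx)]
  · simp

lemma kdiag_norm (f : ι → Matrix q r ℂ) : ‖kdiag f‖ = ⨆ i, ‖f i‖ := by
  rcases isEmpty_or_nonempty ι with hι | hι
  · have : kdiag f = 0 := Subsingleton.elim _ _
    rw [this, norm_zero, Real.iSup_of_isEmpty]
  have hb : BddAbove (Set.range fun i => ‖f i‖) := (Set.finite_range _).bddAbove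
  set S := ⨆ i, ‖f i‖ with hS
  have hS0 : (0:ℝ) ≤ S :=
    le_trans (norm_nonneg _) (le_ciSup hb (Classical.arbitrary ι))
  apply le_antisymm
  · apply l2_opNorm_le_bound _ hS0
    intro x
    have hnn : (0:ℝ) ≤ S * ‖x‖ := mul_nonneg hS0 (norm_nonneg _)
    have key : ‖(WithLp.equiv 2 (ι × q → ℂ)).symm (kdiag f *ᵥ (WithLp.equiv 2 (ι × r → ℂ)) x)‖ ^ 2
        ≤ (S * ‖x‖) ^ 2 := by
      rw [euclid_norm_sq]
      have step1 : ∑ z : ι × q,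
          ‖((WithLp.equiv 2 (ι × q → ℂ)).symm (kdiag f *ᵥ (WithLp.equiv 2 (ι × r → ℂ)) x)) z‖ ^ 2
          = ∑ i : ι, ‖(WithLp.equiv 2 (q → ℂ)).symm
              (f i *ᵥ fun k => x (i, k))‖ ^ 2 := by
        rw [Fintype.sum_prod_type]
        refine Finset.sum_congr rfl fun i _ => ?_
        rw [euclid_norm_sq]
        refine Finset.sum_congr rfl fun j _ => ?_
        congr 1
        exact congrArg norm (kdiag_mulVec f _ i j)
      rw [step1]
      have step2 : ∀ i : ι, ‖(WithLp.equiv 2 (q → ℂ)).symm (f i *ᵥ fun k => x (i, k))‖ ^ 2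
          ≤ S ^ 2 * ‖(WithLp.equiv 2 (r → ℂ)).symm (fun k => x (i, k))‖ ^ 2 := by
        intro i
        have h1 := Matrix.l2_opNorm_mulVec (f i) ((WithLp.equiv 2 (r → ℂ)).symm (fun k => x (i, k)))
        have hfS : ‖f i‖ ≤ S := le_ciSup hb i
        have h2 : ‖(WithLp.equiv 2 (q → ℂ)).symm (f i *ᵥ fun k => x (i, k))‖
            ≤ S * ‖(WithLp.equiv 2 (r → ℂ)).symm (fun k => x (i, k))‖ := by
          refine le_trans ?_ (mul_le_mul_of_nonneg_right hfS (norm_nonneg _))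
          simpa using h1
        calc ‖(WithLp.equiv 2 (q → ℂ)).symm (f i *ᵥ fun k => x (i, k))‖ ^ 2
            ≤ (S * ‖(WithLp.equiv 2 (r → ℂ)).symm (fun k => x (i, k))‖) ^ 2 := by
              apply pow_le_pow_left₀ (norm_nonneg _) h2
          _ = S ^ 2 * ‖(WithLp.equiv 2 (r → ℂ)).symm (fun k => x (i, k))‖ ^ 2 := by ring
      calc ∑ i : ι, ‖(WithLp.equiv 2 (q → ℂ)).symm (f i *ᵥ fun k => x (i, k))‖ ^ 2
          ≤ ∑ i : ι, S ^ 2 * ‖(WithLp.equiv 2 (r → ℂ)).symm (fun k => x (i, k))‖ ^ 2 :=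
            Finset.sum_le_sum fun i _ => step2 i
        _ = S ^ 2 * ∑ i : ι, ∑ k : r, ‖x (i, k)‖ ^ 2 := by
            rw [Finset.mul_sum]
            refine Finset.sum_congr rfl fun i _ => ?_
            rw [euclid_norm_sq]
            rfl
        _ = (S * ‖x‖) ^ 2 := by
            have hx2 : ‖x‖ ^ 2 = ∑ i : ι, ∑ k : r, ‖x (i, k)‖ ^ 2 := by
              rw [euclid_norm_sq, Fintype.sum_prod_type]
            rw [mul_pow, hx2]
    have := Real.sqrt_le_sqrt key
    rwa [Real.sqrt_sq (norm_nonneg _), Real.sqrt_sq hnn] at this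
  · apply ciSup_le
    intro i
    apply l2_opNorm_le_bound _ (norm_nonneg _)
    intro y
    set emb : EuclideanSpace ℂ (ι × r) :=
      (WithLp.equiv 2 (ι × r → ℂ)).symm (fun z => if z.1 = i then y z.2 else 0) with hemb
    have hemb_norm : ‖emb‖ = ‖y‖ := by
      have h1 : ‖emb‖ ^ 2 = ‖y‖ ^ 2 := by
        rw [euclid_norm_sq, euclid_norm_sq, Fintype.sum_prod_type]
        rw [Finset.sum_eq_single i]
        · simp [hemb]
        · intro x _ hx; simp [hemb, hx]
        · simp
      have := congrArg Real.sqrt h1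
      rwa [Real.sqrt_sq (norm_nonneg _), Real.sqrt_sq (norm_nonneg _)] at this
    have happ : ∀ z : ι × q, (kdiag f *ᵥ (WithLp.equiv 2 (ι × r → ℂ)) emb) z
        = if z.1 = i then (f i *ᵥ (WithLp.equiv 2 (r → ℂ)) y) z.2 else 0 := by
      rintro ⟨i', j⟩
      rw [show ((WithLp.equiv 2 (ι × r → ℂ)) emb) = (fun z => if z.1 = i then y z.2 else 0) from rfl]
      rw [kdiag_mulVec]
      rcases eq_or_ne i' i with rfl | h
      · simp [Matrix.mulVec]
      · simp only [h, if_neg h]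
        simp [Matrix.mulVec, dotProduct, h]
    have hnorm_eq : ‖(WithLp.equiv 2 (ι × q → ℂ)).symm (kdiag f *ᵥ (WithLp.equiv 2 (ι × r → ℂ)) emb)‖
        = ‖(WithLp.equiv 2 (q → ℂ)).symm (f i *ᵥ (WithLp.equiv 2 (r → ℂ)) y)‖ := by
      have h1 : ‖(WithLp.equiv 2 (ι × q → ℂ)).symm (kdiag f *ᵥ (WithLp.equiv 2 (ι × r → ℂ)) emb)‖ ^ 2
          = ‖(WithLp.equiv 2 (q → ℂ)).symm (f i *ᵥ (WithLp.equiv 2 (r → ℂ)) y)‖ ^ 2 := by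
        rw [euclid_norm_sq, euclid_norm_sq, Fintype.sum_prod_type]
        rw [Finset.sum_eq_single i]
        · refine Finset.sum_congr rfl fun j _ => ?_
          have := happ (i, j)
          simp only [if_pos rfl] at this
          rw [show ((WithLp.equiv 2 (ι × q → ℂ)).symm (kdiag f *ᵥ (WithLp.equiv 2 (ι × r → ℂ)) emb)) (i, j)
            = (kdiag f *ᵥ (WithLp.equiv 2 (ι × r → ℂ)) emb) (i, j) from rfl, this]
          rfl
        · intro x _ hx
          refine Finset.sum_eq_zero fun j _ => ?_
          have := happ (x, j)
          simp only [if_neg hx] at this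
          rw [show ((WithLp.equiv 2 (ι × q → ℂ)).symm (kdiag f *ᵥ (WithLp.equiv 2 (ι × r → ℂ)) emb)) (x, j)
            = (kdiag f *ᵥ (WithLp.equiv 2 (ι × r → ℂ)) emb) (x, j) from rfl, this]
          simp
        · simp
      have := congrArg Real.sqrt h1
      rwa [Real.sqrt_sq (norm_nonneg _), Real.sqrt_sq (norm_nonneg _)] at this
    calc ‖(WithLp.equiv 2 (q → ℂ)).symm (f i *ᵥ (WithLp.equiv 2 (r → ℂ)) y)‖
        = ‖(WithLp.equiv 2 (ι × q → ℂ)).symm (kdiag f *ᵥ (WithLp.equiv 2 (ι × r → ℂ)) emb)‖ :=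
          hnorm_eq.symm
      _ ≤ ‖kdiag f‖ * ‖emb‖ := by simpa using Matrix.l2_opNorm_mulVec (kdiag f) emb
      _ = ‖kdiag f‖ * ‖y‖ := by rw [hemb_norm]

end knorm

section maps
variable {a b c : Type*} [Fintype b]

lemma map_mulR (X : Matrix a b ℝ) (Y : Matrix b c ℝ) :
    (X * Y).map Complex.ofReal = X.map Complex.ofReal * Y.map Complex.ofReal := by
  ext i j
  simp [Matrix.mul_apply, Matrix.map_apply]

lemma map_subR (X Y : Matrix a b ℝ) :
    (X - Y).map Complex.ofReal = X.map Complex.ofReal - Y.map Complex.ofReal := by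
  ext i j; simp [Matrix.map_apply]

lemma map_smulR (γ : ℝ) (X : Matrix a b ℝ) :
    ((γ • X).map Complex.ofReal) = (γ : ℂ) • X.map Complex.ofReal := by
  ext i j; simp [Matrix.map_apply]

lemma map_oneR {a : Type*} [DecidableEq a] :
    ((1 : Matrix a a ℝ)).map Complex.ofReal = 1 := by
  ext i j; by_cases h : i = j <;> simp [Matrix.map_apply, Matrix.one_apply, h]

lemma map_kronR {a b c d : Type*} (X : Matrix a b ℝ) (Y : Matrix c d ℝ) :
    (X ⊗ₖ Y).map Complex.ofReal = (X.map Complex.ofReal) ⊗ₖ (Y.map Complex.ofReal) := by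
  ext i j; simp [Matrix.map_apply, Matrix.kroneckerMap_apply]

lemma conjTranspose_mapR {a b : Type*} (X : Matrix a b ℝ) :
    (X.map Complex.ofReal)ᴴ = (Xᵀ).map Complex.ofReal := by
  ext i j
  simp [Matrix.map_apply, Matrix.conjTranspose_apply, Complex.conj_ofReal]

lemma star_eq_transposeR {a : Type*} (X : Matrix a a ℝ) : star X = Xᵀ := by
  ext i j
  simp [Matrix.star_apply]

end maps

section kron
variable {ι : Type*} [Fintype ι] [DecidableEq ι] {q r : Type*}

lemma one_kron_eq_kdiag (X : Matrix q r ℂ) :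
    (1 : Matrix ι ι ℂ) ⊗ₖ X = kdiag (fun _ => X) := by
  ext ⟨i, j⟩ ⟨i', k⟩
  simp [Matrix.kroneckerMap_apply, Matrix.one_apply, kdiag, ite_mul]

lemma diagonal_kron_eq_kdiag (d : ι → ℂ) (X : Matrix q r ℂ) :
    (Matrix.diagonal d) ⊗ₖ X = kdiag (fun i => d i • X) := by
  ext ⟨i, j⟩ ⟨i', k⟩
  by_cases h : i = i' <;>
  simp [Matrix.kroneckerMap_apply, Matrix.diagonal_apply, kdiag, h]

lemma kdiag_sub (f g : ι → Matrix q r ℂ) :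
    kdiag f - kdiag g = kdiag (fun i => f i - g i) := by
  ext ⟨i, j⟩ ⟨i', k⟩
  by_cases h : i = i' <;> simp [kdiag, h]

lemma kdiag_add (f g : ι → Matrix q r ℂ) :
    kdiag f + kdiag g = kdiag (fun i => f i + g i) := by
  ext ⟨i, j⟩ ⟨i', k⟩
  by_cases h : i = i' <;> simp [kdiag, h]

lemma smul_one_eq_kdiag [DecidableEq q] (s : ℂ) :
    s • (1 : Matrix (ι × q) (ι × q) ℂ) = kdiag (fun _ => s • (1 : Matrix q q ℂ)) := by
  ext ⟨i, j⟩ ⟨i', k⟩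
  by_cases h : i = i' <;> by_cases h2 : j = k <;>
    simp [kdiag, Matrix.one_apply, h, h2, Prod.ext_iff]

end kron

lemma real_biSup_range {ι : Type*} [Fintype ι] (e : ι → ℝ) (g : ℝ → ℝ) (hg : ∀ γ, 0 ≤ g γ) :
    ⨆ γ ∈ Set.range e, g γ = ⨆ i, g (e i) := by
  rcases isEmpty_or_nonempty ι with hι | hι
  · rw [Set.range_eq_empty e,
      show (⨆ i, g (e i)) = 0 from Real.iSup_of_isEmpty _]
    have h0 : ∀ γ : ℝ, (⨆ _ : γ ∈ (∅ : Set ℝ), g γ) = 0 := fun γ =>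
      @Real.iSup_of_isEmpty _ ⟨fun hh => hh⟩ _
    simp only [h0, ciSup_const]
  · set S := ⨆ i, g (e i) with hSdef
    have hb : BddAbove (Set.range fun i => g (e i)) := (Set.finite_range _).bddAbove
    have hS0 : 0 ≤ S := le_trans (hg _) (le_ciSup hb (Classical.arbitrary ι))
    have hfun : ∀ γ : ℝ, (⨆ _ : γ ∈ Set.range e, g γ) ≤ S := by
      intro γ
      rcases em (γ ∈ Set.range e) with h | h
      · haveI : Nonempty (γ ∈ Set.range e) := ⟨h⟩
        rw [ciSup_const]
        obtain ⟨i, rfl⟩ := h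
        exact le_ciSup hb i
      · haveI : IsEmpty (γ ∈ Set.range e) := ⟨fun hh => h hh⟩
        rw [Real.iSup_of_isEmpty]
        exact hS0
    apply le_antisymm
    · exact ciSup_le hfun
    · apply ciSup_le
      intro i
      have hbig : BddAbove (Set.range fun γ : ℝ => ⨆ _ : γ ∈ Set.range e, g γ) :=
        ⟨S, by rintro x ⟨γ, rfl⟩; exact hfun γ⟩
      have : g (e i) = ⨆ _ : e i ∈ Set.range e, g (e i) := by
        haveI : Nonempty (e i ∈ Set.range e) := ⟨⟨i, rfl⟩⟩
        rw [ciSup_const]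
      rw [this]
      exact le_ciSup hbig (e i)


lemma kron_conjT {a b c d : Type*} (X : Matrix a b ℂ) (Y : Matrix c d ℂ) :
    (X ⊗ₖ Y)ᴴ = Xᴴ ⊗ₖ Yᴴ := by
  ext ⟨i, j⟩ ⟨k, l⟩
  simp [Matrix.conjTranspose_apply, Matrix.kroneckerMap_apply]

/-- Decomposition of the ℓ² operator norm of the closed-loop transfer matrix: if
`sIₙ − A_γ` is invertible for every eigenvalue `γ` of the symmetric matrix `K`, then
`sI_{Nn} − Â` is invertible and
`‖Ĉ (sI − Â)⁻¹ (I_N ⊗ B_d)‖ = max_{γ ∈ σ(K)} ‖C_γ (sI − A_γ)⁻¹ B_d‖`,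
where `A_γ = A − B(F₁+γF₂)`, `C_γ = C − D(F₁+γF₂)`,
`Â = I_N ⊗ (A−BF₁) − K ⊗ (BF₂)` and `Ĉ = I_N ⊗ (C−DF₁) − K ⊗ (DF₂)`. -/
theorem stmt_10 {n m p nd N : ℕ}
    (A : Matrix (Fin n) (Fin n) ℝ) (B : Matrix (Fin n) (Fin m) ℝ)
    (C : Matrix (Fin p) (Fin n) ℝ) (D : Matrix (Fin p) (Fin m) ℝ)
    (Bd : Matrix (Fin n) (Fin nd) ℝ) (F₁ F₂ : Matrix (Fin m) (Fin n) ℝ)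
    (K : Matrix (Fin N) (Fin N) ℝ) (hK : K.IsSymm)
    (Ahat : Matrix (Fin N × Fin n) (Fin N × Fin n) ℝ)
    (hAhat : Ahat = (1 : Matrix (Fin N) (Fin N) ℝ) ⊗ₖ (A - B * F₁) - K ⊗ₖ (B * F₂))
    (Chat : Matrix (Fin N × Fin p) (Fin N × Fin n) ℝ)
    (hChat : Chat = (1 : Matrix (Fin N) (Fin N) ℝ) ⊗ₖ (C - D * F₁) - K ⊗ₖ (D * F₂))
    (s : ℂ)
    (hs : ∀ γ ∈ spectrum ℝ K,
      IsUnit (s • (1 : Matrix (Fin n) (Fin n) ℂ)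
        - (A - B * (F₁ + γ • F₂)).map Complex.ofReal)) :
    IsUnit (s • (1 : Matrix (Fin N × Fin n) (Fin N × Fin n) ℂ) - Ahat.map Complex.ofReal) ∧
    ‖Chat.map Complex.ofReal
        * (s • (1 : Matrix (Fin N × Fin n) (Fin N × Fin n) ℂ) - Ahat.map Complex.ofReal)⁻¹
        * ((1 : Matrix (Fin N) (Fin N) ℝ) ⊗ₖ Bd).map Complex.ofReal‖
      = ⨆ γ ∈ spectrum ℝ K,
          ‖(C - D * (F₁ + γ • F₂)).map Complex.ofReal
            * (s • (1 : Matrix (Fin n) (Fin n) ℂ)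
                - (A - B * (F₁ + γ • F₂)).map Complex.ofReal)⁻¹
            * Bd.map Complex.ofReal‖ := by
  classical
  subst hAhat
  subst hChat
  have hK' : K.IsHermitian := hK
  set e := hK'.eigenvalues with he
  set U : Matrix (Fin N) (Fin N) ℝ :=
    ((Matrix.IsHermitian.eigenvectorUnitary hK' : Matrix.unitaryGroup (Fin N) ℝ) :
      Matrix (Fin N) (Fin N) ℝ) with hUdef
  have hU1 : star U * U = 1 :=
    Matrix.mem_unitaryGroup_iff'.mp (Matrix.IsHermitian.eigenvectorUnitary hK').2
  have hU2 : U * star U = 1 :=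
    Matrix.mem_unitaryGroup_iff.mp (Matrix.IsHermitian.eigenvectorUnitary hK').2
  have hKspec : K = U * Matrix.diagonal e * star U := by
    have := hK'.spectral_theorem
    simpa using this
  have hspec : spectrum ℝ K = Set.range e := by
    have hu : IsUnit U := isUnit_iff_exists.2 ⟨star U, hU2, hU1⟩
    obtain ⟨u, hu⟩ := hu
    have huinv : (↑u⁻¹ : Matrix (Fin N) (Fin N) ℝ) = star U := by
      have h1 : (u : Matrix (Fin N) (Fin N) ℝ) * star U = 1 := by rw [hu]; exact hU2
      calc (↑u⁻¹ : Matrix (Fin N) (Fin N) ℝ) = ↑u⁻¹ * (↑u * star U) := by rw [h1, mul_one]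
        _ = star U := by rw [← mul_assoc, Units.inv_mul, one_mul]
    rw [hKspec, ← hu,
      show star (↑u : Matrix (Fin N) (Fin N) ℝ) = (↑u⁻¹ : Matrix (Fin N) (Fin N) ℝ) from by
        rw [hu, huinv],
      spectrum.units_conjugate, spectrum_diagonal]
  have hmem : ∀ i, e i ∈ spectrum ℝ K := fun i => hK'.eigenvalues_mem_spectrum_real i
  -- complex objects
  set Uc : Matrix (Fin N) (Fin N) ℂ := U.map Complex.ofReal with hUcdef
  set ec : Fin N → ℂ := fun i => (e i : ℂ) with hecdef
  set Pa : Matrix (Fin n) (Fin n) ℂ := (A - B * F₁).map Complex.ofReal with hPa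
  set Qa : Matrix (Fin n) (Fin n) ℂ := (B * F₂).map Complex.ofReal with hQa
  set Pc : Matrix (Fin p) (Fin n) ℂ := (C - D * F₁).map Complex.ofReal with hPc
  set Qc : Matrix (Fin p) (Fin n) ℂ := (D * F₂).map Complex.ofReal with hQc
  set Bc : Matrix (Fin n) (Fin nd) ℂ := Bd.map Complex.ofReal with hBc
  set MA : Fin N → Matrix (Fin n) (Fin n) ℂ := fun i =>
    s • 1 - (A - B * (F₁ + e i • F₂)).map Complex.ofReal with hMA
  set MC : Fin N → Matrix (Fin p) (Fin n) ℂ := fun i =>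
    (C - D * (F₁ + e i • F₂)).map Complex.ofReal with hMC
  have hUc1 : Ucᴴ * Uc = 1 := by
    rw [hUcdef, conjTranspose_mapR, ← map_mulR, ← star_eq_transposeR, hU1, map_oneR]
  have hUc2 : Uc * Ucᴴ = 1 := by
    rw [hUcdef, conjTranspose_mapR, ← map_mulR, ← star_eq_transposeR, hU2, map_oneR]
  have hdiag : (Matrix.diagonal e).map Complex.ofReal = Matrix.diagonal ec :=
    Matrix.diagonal_map (by simp)
  have hKc : K.map Complex.ofReal = Uc * Matrix.diagonal ec * Ucᴴ := by
    rw [hUcdef, conjTranspose_mapR, ← star_eq_transposeR, ← hdiag, ← map_mulR, ← map_mulR,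
      ← hKspec]
  -- Kronecker unitaries
  set Vn : Matrix (Fin N × Fin n) (Fin N × Fin n) ℂ :=
    Uc ⊗ₖ (1 : Matrix (Fin n) (Fin n) ℂ) with hVn
  set Vp : Matrix (Fin N × Fin p) (Fin N × Fin p) ℂ :=
    Uc ⊗ₖ (1 : Matrix (Fin p) (Fin p) ℂ) with hVp
  set Vd : Matrix (Fin N × Fin nd) (Fin N × Fin nd) ℂ :=
    Uc ⊗ₖ (1 : Matrix (Fin nd) (Fin nd) ℂ) with hVd
  have hVn1 : Vnᴴ * Vn = 1 := by
    rw [hVn, kron_conjT, Matrix.conjTranspose_one, ← Matrix.mul_kronecker_mul, hUc1, one_mul,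
      Matrix.one_kronecker_one]
  have hVn2 : Vn * Vnᴴ = 1 := by
    rw [hVn, kron_conjT, Matrix.conjTranspose_one, ← Matrix.mul_kronecker_mul, hUc2, one_mul,
      Matrix.one_kronecker_one]
  have hVp1 : Vpᴴ * Vp = 1 := by
    rw [hVp, kron_conjT, Matrix.conjTranspose_one, ← Matrix.mul_kronecker_mul, hUc1, one_mul,
      Matrix.one_kronecker_one]
  have hVp2 : Vp * Vpᴴ = 1 := by
    rw [hVp, kron_conjT, Matrix.conjTranspose_one, ← Matrix.mul_kronecker_mul, hUc2, one_mul,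
      Matrix.one_kronecker_one]
  have hVd1 : Vdᴴ * Vd = 1 := by
    rw [hVd, kron_conjT, Matrix.conjTranspose_one, ← Matrix.mul_kronecker_mul, hUc1, one_mul,
      Matrix.one_kronecker_one]
  have hVd2 : Vd * Vdᴴ = 1 := by
    rw [hVd, kron_conjT, Matrix.conjTranspose_one, ← Matrix.mul_kronecker_mul, hUc2, one_mul,
      Matrix.one_kronecker_one]
  -- blockwise identities
  have hMAeq : MA = fun i => (s • 1 - Pa) + ec i • Qa := by
    funext i
    simp only [hMA, hPa, hQa]
    have : A - B * (F₁ + e i • F₂) = (A - B * F₁) - e i • (B * F₂) := by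
      rw [Matrix.mul_add, Matrix.mul_smul]
      abel
    rw [this, map_subR, map_smulR]
    simp only [hecdef]
    abel
  have hMCeq : MC = fun i => Pc - ec i • Qc := by
    funext i
    simp only [hMC, hPc, hQc]
    have : C - D * (F₁ + e i • F₂) = (C - D * F₁) - e i • (D * F₂) := by
      rw [Matrix.mul_add, Matrix.mul_smul]
      abel
    rw [this, map_subR, map_smulR]
  have hMAunit : ∀ i, IsUnit (MA i) := fun i => hs (e i) (hmem i)
  have hVnU : IsUnit Vn := isUnit_iff_exists.2 ⟨Vnᴴ, hVn2, hVn1⟩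
  have hVnHU : IsUnit Vnᴴ := isUnit_iff_exists.2 ⟨Vn, hVn1, hVn2⟩
  -- expansion of kdiag MA
  have expandA : kdiag MA = s • (1 : Matrix (Fin N × Fin n) (Fin N × Fin n) ℂ)
      - (1 : Matrix (Fin N) (Fin N) ℂ) ⊗ₖ Pa + (Matrix.diagonal ec) ⊗ₖ Qa := by
    rw [hMAeq, smul_one_eq_kdiag, one_kron_eq_kdiag, diagonal_kron_eq_kdiag, kdiag_sub, kdiag_add]
  have expandC : kdiag MC = (1 : Matrix (Fin N) (Fin N) ℂ) ⊗ₖ Pc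
      - (Matrix.diagonal ec) ⊗ₖ Qc := by
    rw [hMCeq, one_kron_eq_kdiag, diagonal_kron_eq_kdiag, kdiag_sub]
  -- conjugation computations
  have c1 : Vn * (s • (1 : Matrix (Fin N × Fin n) (Fin N × Fin n) ℂ)) * Vnᴴ = s • 1 := by
    rw [mul_smul_comm, mul_one, smul_mul_assoc, hVn2]
  have c2 : Vn * ((1 : Matrix (Fin N) (Fin N) ℂ) ⊗ₖ Pa) * Vnᴴ
      = (1 : Matrix (Fin N) (Fin N) ℂ) ⊗ₖ Pa := by
    rw [hVn, kron_conjT, Matrix.conjTranspose_one, ← Matrix.mul_kronecker_mul,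
      ← Matrix.mul_kronecker_mul]
    simp [hUc2]
  have c3 : Vn * ((Matrix.diagonal ec) ⊗ₖ Qa) * Vnᴴ = (K.map Complex.ofReal) ⊗ₖ Qa := by
    rw [hVn, kron_conjT, Matrix.conjTranspose_one, ← Matrix.mul_kronecker_mul,
      ← Matrix.mul_kronecker_mul, hKc]
    simp
  -- the big matrix is conjugate to the block diagonal one
  have hAhatc : ((1 : Matrix (Fin N) (Fin N) ℝ) ⊗ₖ (A - B * F₁) - K ⊗ₖ (B * F₂)).map Complex.ofReal
      = (1 : Matrix (Fin N) (Fin N) ℂ) ⊗ₖ Pa - (K.map Complex.ofReal) ⊗ₖ Qa := by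
    rw [map_subR, map_kronR, map_kronR, map_oneR, hPa, hQa]
  have hM : s • (1 : Matrix (Fin N × Fin n) (Fin N × Fin n) ℂ)
      - ((1 : Matrix (Fin N) (Fin N) ℝ) ⊗ₖ (A - B * F₁) - K ⊗ₖ (B * F₂)).map Complex.ofReal
      = Vn * kdiag MA * Vnᴴ := by
    rw [hAhatc]
    have : Vn * kdiag MA * Vnᴴ
        = Vn * (s • (1 : Matrix (Fin N × Fin n) (Fin N × Fin n) ℂ)) * Vnᴴ
          - Vn * ((1 : Matrix (Fin N) (Fin N) ℂ) ⊗ₖ Pa) * Vnᴴ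
          + Vn * ((Matrix.diagonal ec) ⊗ₖ Qa) * Vnᴴ := by
      rw [expandA]
      noncomm_ring
    rw [this, c1, c2, c3]
    abel
  set kInv : Matrix (Fin N × Fin n) (Fin N × Fin n) ℂ := kdiag (fun i => (MA i)⁻¹) with hkInv
  set kB : Matrix (Fin N × Fin n) (Fin N × Fin nd) ℂ := kdiag (fun _ => Bc) with hkB
  set kG : Matrix (Fin N × Fin p) (Fin N × Fin nd) ℂ :=
    kdiag (fun i => MC i * (MA i)⁻¹ * Bc) with hkG
  have hkdU : IsUnit (kdiag MA) := kdiag_isUnit MA hMAunit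
  have hMunit : IsUnit (s • (1 : Matrix (Fin N × Fin n) (Fin N × Fin n) ℂ)
      - ((1 : Matrix (Fin N) (Fin N) ℝ) ⊗ₖ (A - B * F₁) - K ⊗ₖ (B * F₂)).map Complex.ofReal) := by
    rw [hM]
    exact (hVnU.mul hkdU).mul hVnHU
  have hMinv : (s • (1 : Matrix (Fin N × Fin n) (Fin N × Fin n) ℂ)
      - ((1 : Matrix (Fin N) (Fin N) ℝ) ⊗ₖ (A - B * F₁) - K ⊗ₖ (B * F₂)).map Complex.ofReal)⁻¹
      = Vn * kInv * Vnᴴ := by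
    apply Matrix.inv_eq_right_inv
    rw [hM]
    calc Vn * kdiag MA * Vnᴴ * (Vn * kInv * Vnᴴ)
        = Vn * (kdiag MA * (Vnᴴ * Vn) * kInv) * Vnᴴ := by
          noncomm_ring
      _ = Vn * kdiag (fun i => MA i * (MA i)⁻¹) * Vnᴴ := by
          rw [hVn1, mul_one, hkInv, kdiag_mul]
      _ = 1 := by
          rw [show (fun i => MA i * (MA i)⁻¹) = fun _ : Fin N => (1 : Matrix (Fin n) (Fin n) ℂ)
              from funext fun i => Matrix.mul_nonsing_inv _
                ((Matrix.isUnit_iff_isUnit_det _).1 (hMAunit i)),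
            kdiag_one, mul_one, hVn2]
  have hChatc : ((1 : Matrix (Fin N) (Fin N) ℝ) ⊗ₖ (C - D * F₁) - K ⊗ₖ (D * F₂)).map Complex.ofReal
      = Vp * kdiag MC * Vnᴴ := by
    rw [map_subR, map_kronR, map_kronR, map_oneR, ← hPc, ← hQc]
    have h1 : Vp * ((1 : Matrix (Fin N) (Fin N) ℂ) ⊗ₖ Pc) * Vnᴴ
        = (1 : Matrix (Fin N) (Fin N) ℂ) ⊗ₖ Pc := by
      rw [hVp, hVn, kron_conjT, Matrix.conjTranspose_one, ← Matrix.mul_kronecker_mul,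
        ← Matrix.mul_kronecker_mul]
      simp [hUc2]
    have h2 : Vp * ((Matrix.diagonal ec) ⊗ₖ Qc) * Vnᴴ = (K.map Complex.ofReal) ⊗ₖ Qc := by
      rw [hVp, hVn, kron_conjT, Matrix.conjTranspose_one, ← Matrix.mul_kronecker_mul,
        ← Matrix.mul_kronecker_mul, hKc]
      simp
    calc (1 : Matrix (Fin N) (Fin N) ℂ) ⊗ₖ Pc - (K.map Complex.ofReal) ⊗ₖ Qc
        = Vp * ((1 : Matrix (Fin N) (Fin N) ℂ) ⊗ₖ Pc) * Vnᴴ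
          - Vp * ((Matrix.diagonal ec) ⊗ₖ Qc) * Vnᴴ := by rw [h1, h2]
      _ = Vp * kdiag MC * Vnᴴ := by rw [expandC, Matrix.mul_sub, Matrix.sub_mul]
  have hBdc : (((1 : Matrix (Fin N) (Fin N) ℝ) ⊗ₖ Bd).map Complex.ofReal)
      = Vn * kB * Vdᴴ := by
    rw [map_kronR, map_oneR, ← hBc]
    rw [hkB, show kdiag (fun _ : Fin N => Bc) = (1 : Matrix (Fin N) (Fin N) ℂ) ⊗ₖ Bc from
      (one_kron_eq_kdiag Bc).symm]
    rw [hVn, hVd, kron_conjT, Matrix.conjTranspose_one, ← Matrix.mul_kronecker_mul,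
      ← Matrix.mul_kronecker_mul]
    simp [hUc2]
  refine ⟨hMunit, ?_⟩
  rw [hMinv, hChatc, hBdc]
  have hGeq : Vp * kdiag MC * Vnᴴ * (Vn * kInv * Vnᴴ)
      * (Vn * kB * Vdᴴ)
      = Vp * kG * Vdᴴ := by
    calc Vp * kdiag MC * Vnᴴ * (Vn * kInv * Vnᴴ)
        * (Vn * kB * Vdᴴ)
        = Vp * (kdiag MC * ((Vnᴴ * Vn) * (kInv
            * ((Vnᴴ * Vn) * kB)))) * Vdᴴ := by
          simp only [Matrix.mul_assoc]
      _ = Vp * kG * Vdᴴ := by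
          rw [hVn1, Matrix.one_mul, Matrix.one_mul, hkInv, hkB, kdiag_mul, kdiag_mul, hkG]
          exact congrArg (fun X => Vp * X * Vdᴴ) (congrArg kdiag (funext fun i =>
            (Matrix.mul_assoc (MC i) ((MA i)⁻¹) Bc).symm))
  rw [hGeq]
  have hnormeq : ‖Vp * kG * Vdᴴ‖
      = ‖kG‖ := by
    apply l2_norm_unitary_conj _ _ hVp1 hVp2
    · rw [Matrix.conjTranspose_conjTranspose]; exact hVd2
    · rw [Matrix.conjTranspose_conjTranspose]; exact hVd1
  rw [hnormeq, hkG, kdiag_norm, hspec]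
  rw [real_biSup_range e _ (fun γ => norm_nonneg _)]
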